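/- In the deterministic service model, removing a customer from the state cannot increase the value: for all r, t ∈ ℕ, every finite multiset M of deadlines and every deadline d ∈ ℕ, one has V(r, t, M) ≤ V(r, t, d ::ₘ M). -/

import Mathlib

/-- Inconvenience function: `f η t d = η^(t-d+1)` if the deadline `d` is due
(`d ≤ t`), and `0` otherwise. -/
noncomputable def inconvenience (η : ℝ) (t d : ℕ) : ℝ :=
  if d ≤ t then η ^ (t - d + 1) else 0

/-- Value function of the deterministic service model: over `r` remaining
periods, starting in period `t` with multiset `M` of customer deadlines and
per-period service capacity `m`, the minimal accumulated inconvenience.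
`V η m 0 t M = 0` and
`V η m (r+1) t M = min over submultisets A ≤ M with card A ≤ m of
  [∑_{d ∈ M - A} f(t,d) + V η m r (t+1) (M - A)]`. -/
noncomputable def V (η : ℝ) (m : ℕ) : ℕ → ℕ → Multiset ℕ → ℝ
  | 0, _, _ => 0
  | r + 1, t, M =>
      ⨅ A : {A : Multiset ℕ // A ≤ M ∧ Multiset.card A ≤ m},
        (((M - A.1).map (inconvenience η t)).sum + V η m r (t + 1) (M - A.1))

lemma inconvenience_nonneg (η : ℝ) (hη : 1 < η) (t d : ℕ) :
    0 ≤ inconvenience η t d := by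
  unfold inconvenience
  split
  · positivity
  · exact le_refl 0

instance VNonempty (M : Multiset ℕ) (m : ℕ) :
    Nonempty {A : Multiset ℕ // A ≤ M ∧ Multiset.card A ≤ m} :=
  ⟨⟨0, zero_le, by simp⟩⟩

lemma sum_map_nonneg (η : ℝ) (hη : 1 < η) (t : ℕ) (M : Multiset ℕ) :
    0 ≤ (M.map (inconvenience η t)).sum := by
  apply Multiset.sum_nonneg
  intro x hx
  obtain ⟨d, _, rfl⟩ := Multiset.mem_map.mp hx
  exact inconvenience_nonneg η hη t d

lemma V_nonneg (η : ℝ) (hη : 1 < η) (m r t : ℕ) (M : Multiset ℕ) :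
    0 ≤ V η m r t M := by
  induction r generalizing t M with
  | zero => simp [V]
  | succ r ih =>
    rw [V]
    apply le_ciInf
    intro A
    have := sum_map_nonneg η hη t (M - A.1)
    have := ih (t + 1) (M - A.1)
    linarith

lemma V_bddBelow (η : ℝ) (hη : 1 < η) (m r t : ℕ) (M : Multiset ℕ) :
    BddBelow (Set.range fun A : {A : Multiset ℕ // A ≤ M ∧ Multiset.card A ≤ m} =>
      (((M - A.1).map (inconvenience η t)).sum + V η m r (t + 1) (M - A.1))) := by
  refine ⟨0, ?_⟩
  rintro x ⟨A, rfl⟩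
  exact add_nonneg (sum_map_nonneg η hη t (M - A.1)) (V_nonneg η hη m r (t + 1) (M - A.1))

/-- Removing a customer from the state cannot increase the value. -/
theorem value_le_of_remove_customer (η : ℝ) (hη : 1 < η) (m : ℕ)
    (r t : ℕ) (M : Multiset ℕ) (d : ℕ) :
    V η m r t M ≤ V η m r t (d ::ₘ M) := by
  induction r generalizing t M with
  | zero => simp [V]
  | succ r ih =>
    conv_rhs => rw [V]
    apply le_ciInf
    rintro ⟨A, hA, hcard⟩
    by_cases hd : d ∈ A
    · -- use A.erase d as the action on M
      set B := A.erase d with hB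
      have hBle : B ≤ M := by
        have := Multiset.erase_le_erase d hA
        rwa [Multiset.erase_cons_head] at this
      have hBcard : Multiset.card B ≤ m :=
        le_trans (Multiset.card_le_card (Multiset.erase_le d A)) hcard
      have hAeq : A = d ::ₘ B := (Multiset.cons_erase hd).symm
      have hsub : (d ::ₘ M) - A = M - B := by
        rw [hAeq, Multiset.sub_cons, Multiset.erase_cons_head]
      rw [V]
      calc V η m (r + 1) t M ≤ _ :=
            ciInf_le (V_bddBelow η hη m r t M) ⟨B, hBle, hBcard⟩
        _ = _ := by rw [hsub]
    · -- A ≤ M, and (d ::ₘ M) - A = d ::ₘ (M - A)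
      have hAle : A ≤ M := by
        rw [Multiset.le_iff_count] at hA ⊢
        intro a
        by_cases ha : a = d
        · subst ha
          simp [Multiset.count_eq_zero_of_notMem hd]
        · have := hA a
          rwa [Multiset.count_cons_of_ne ha] at this
      have hsub : (d ::ₘ M) - A = d ::ₘ (M - A) := by
        rw [Multiset.cons_sub_of_le d hAle]
      rw [hsub]
      have h1 : V η m (r + 1) t M ≤
          ((M - A).map (inconvenience η t)).sum + V η m r (t + 1) (M - A) := by
        rw [V]
        exact ciInf_le (V_bddBelow η hη m r t M) ⟨A, hAle, hcard⟩
      have h2 : V η m r (t + 1) (M - A) ≤ V η m r (t + 1) (d ::ₘ (M - A)) :=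
        ih (t + 1) (M - A)
      have h3 : ((d ::ₘ (M - A)).map (inconvenience η t)).sum =
          inconvenience η t d + ((M - A).map (inconvenience η t)).sum := by
        simp [Multiset.map_cons]
      rw [h3]
      have := inconvenience_nonneg η hη t d
      linarith
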